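/- Consider the Smorodinsky–Winternitz Hamiltonian H = p1^2 + p2^2 + a(q1^2+q2^2) + b1/q1^2 + b2/q2^2. Then the function G = (q1 p2 - q2 p1)^2 + b1 q2^2/q1^2 + b2 q1^2/q2^2 Poisson commutes with H on the set q1 ≠ 0, q2 ≠ 0. -/

import Mathlib

/-- Canonical Poisson bracket on R^4 with coordinates (q1, q2, p1, p2):
{F,G} = sum_i (dF/dq_i dG/dp_i - dF/dp_i dG/dq_i). -/
noncomputable def pb (F G : ℝ → ℝ → ℝ → ℝ → ℝ) (q1 q2 p1 p2 : ℝ) : ℝ :=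
  deriv (fun x => F x q2 p1 p2) q1 * deriv (fun x => G q1 q2 x p2) p1
  - deriv (fun x => F q1 q2 x p2) p1 * deriv (fun x => G x q2 p1 p2) q1
  + deriv (fun x => F q1 x p1 p2) q2 * deriv (fun x => G q1 q2 p1 x) p2
  - deriv (fun x => F q1 q2 p1 x) p2 * deriv (fun x => G q1 x p1 p2) q2

/-- The polar-separation integral G = (q1 p2 - q2 p1)^2 + b1 q2^2/q1^2 + b2 q1^2/q2^2
Poisson commutes with the Smorodinsky-Winternitz Hamiltonian
H = p1^2 + p2^2 + a(q1^2+q2^2) + b1/q1^2 + b2/q2^2 on the set q1 ≠ 0, q2 ≠ 0. -/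
theorem SW_polar_integral (a b1 b2 : ℝ) (q1 q2 p1 p2 : ℝ) (h1 : q1 ≠ 0) (h2 : q2 ≠ 0) :
    pb (fun q1 q2 p1 p2 =>
         p1 ^ 2 + p2 ^ 2 + a * (q1 ^ 2 + q2 ^ 2) + b1 / q1 ^ 2 + b2 / q2 ^ 2)
       (fun q1 q2 p1 p2 =>
         (q1 * p2 - q2 * p1) ^ 2 + b1 * q2 ^ 2 / q1 ^ 2 + b2 * q1 ^ 2 / q2 ^ 2)
       q1 q2 p1 p2 = 0 := by
  have hq1 : q1 ^ 2 ≠ 0 := pow_ne_zero _ h1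
  have hq2 : q2 ^ 2 ≠ 0 := pow_ne_zero _ h2
  have dHq1 : HasDerivAt (fun x : ℝ =>
      p1 ^ 2 + p2 ^ 2 + a * (x ^ 2 + q2 ^ 2) + b1 / x ^ 2 + b2 / q2 ^ 2)
      (2 * a * q1 - 2 * b1 / q1 ^ 3) q1 := by
    have h := ((((hasDerivAt_const q1 (p1 ^ 2 + p2 ^ 2)).add
        (((hasDerivAt_pow 2 q1).add_const (q2 ^ 2)).const_mul a)).add
        ((hasDerivAt_const q1 b1).div (hasDerivAt_pow 2 q1) hq1)).add_const (b2 / q2 ^ 2))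
    refine h.congr_deriv ?_
    field_simp
    ring
  have dHq2 : HasDerivAt (fun x : ℝ =>
      p1 ^ 2 + p2 ^ 2 + a * (q1 ^ 2 + x ^ 2) + b1 / q1 ^ 2 + b2 / x ^ 2)
      (2 * a * q2 - 2 * b2 / q2 ^ 3) q2 := by
    have h := ((((hasDerivAt_const q2 (p1 ^ 2 + p2 ^ 2)).add
        (((hasDerivAt_pow 2 q2).const_add (q1 ^ 2)).const_mul a)).add_const
        (b1 / q1 ^ 2)).add ((hasDerivAt_const q2 b2).div (hasDerivAt_pow 2 q2) hq2))
    refine h.congr_deriv ?_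
    field_simp
    ring
  have dHp1 : HasDerivAt (fun x : ℝ =>
      x ^ 2 + p2 ^ 2 + a * (q1 ^ 2 + q2 ^ 2) + b1 / q1 ^ 2 + b2 / q2 ^ 2)
      (2 * p1) p1 := by
    have h := ((((hasDerivAt_pow 2 p1).add_const (p2 ^ 2)).add_const
        (a * (q1 ^ 2 + q2 ^ 2))).add_const (b1 / q1 ^ 2)).add_const (b2 / q2 ^ 2)
    refine h.congr_deriv ?_
    ring
  have dHp2 : HasDerivAt (fun x : ℝ =>
      p1 ^ 2 + x ^ 2 + a * (q1 ^ 2 + q2 ^ 2) + b1 / q1 ^ 2 + b2 / q2 ^ 2)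
      (2 * p2) p2 := by
    have h := ((((hasDerivAt_pow 2 p2).const_add (p1 ^ 2)).add_const
        (a * (q1 ^ 2 + q2 ^ 2))).add_const (b1 / q1 ^ 2)).add_const (b2 / q2 ^ 2)
    refine h.congr_deriv ?_
    ring
  have dGq1 : HasDerivAt (fun x : ℝ =>
      (x * p2 - q2 * p1) ^ 2 + b1 * q2 ^ 2 / x ^ 2 + b2 * x ^ 2 / q2 ^ 2)
      (2 * (q1 * p2 - q2 * p1) * p2 - 2 * b1 * q2 ^ 2 / q1 ^ 3
        + 2 * b2 * q1 / q2 ^ 2) q1 := by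
    have h := (((((hasDerivAt_id q1).mul_const p2).sub_const (q2 * p1)).pow 2).add
        ((hasDerivAt_const q1 (b1 * q2 ^ 2)).div (hasDerivAt_pow 2 q1) hq1)).add
        (((hasDerivAt_pow 2 q1).const_mul b2).div_const (q2 ^ 2))
    refine h.congr_deriv ?_
    simp only [id_eq]
    field_simp
    ring
  have dGq2 : HasDerivAt (fun x : ℝ =>
      (q1 * p2 - x * p1) ^ 2 + b1 * x ^ 2 / q1 ^ 2 + b2 * q1 ^ 2 / x ^ 2)
      (-(2 * (q1 * p2 - q2 * p1) * p1) + 2 * b1 * q2 / q1 ^ 2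
        - 2 * b2 * q1 ^ 2 / q2 ^ 3) q2 := by
    have h := (((((hasDerivAt_id q2).mul_const p1).const_sub (q1 * p2)).pow 2).add
        (((hasDerivAt_pow 2 q2).const_mul b1).div_const (q1 ^ 2))).add
        ((hasDerivAt_const q2 (b2 * q1 ^ 2)).div (hasDerivAt_pow 2 q2) hq2)
    refine h.congr_deriv ?_
    simp only [id_eq]
    field_simp
    ring
  have dGp1 : HasDerivAt (fun x : ℝ =>
      (q1 * p2 - q2 * x) ^ 2 + b1 * q2 ^ 2 / q1 ^ 2 + b2 * q1 ^ 2 / q2 ^ 2)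
      (-(2 * (q1 * p2 - q2 * p1) * q2)) p1 := by
    have h := (((((hasDerivAt_id p1).const_mul q2).const_sub (q1 * p2)).pow 2).add_const
        (b1 * q2 ^ 2 / q1 ^ 2)).add_const (b2 * q1 ^ 2 / q2 ^ 2)
    refine h.congr_deriv ?_
    simp only [id_eq]
    ring
  have dGp2 : HasDerivAt (fun x : ℝ =>
      (q1 * x - q2 * p1) ^ 2 + b1 * q2 ^ 2 / q1 ^ 2 + b2 * q1 ^ 2 / q2 ^ 2)
      (2 * (q1 * p2 - q2 * p1) * q1) p2 := by
    have h := (((((hasDerivAt_id p2).const_mul q1).sub_const (q2 * p1)).pow 2).add_const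
        (b1 * q2 ^ 2 / q1 ^ 2)).add_const (b2 * q1 ^ 2 / q2 ^ 2)
    refine h.congr_deriv ?_
    simp only [id_eq]
    ring
  unfold pb
  rw [dHq1.deriv, dHq2.deriv, dHp1.deriv, dHp2.deriv, dGq1.deriv, dGq2.deriv,
    dGp1.deriv, dGp2.deriv]
  field_simp
  ring
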